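/- Fix an integer s_0 ≥ 1 and 1 ≤ k ≤ d, and let A_k(s_0) := {ν ∈ N : ⟨ν, e_i⟩ > 0 for all 1 ≤ i ≤ d and φ_k(ν) ≤ s_0 < φ_{k+1}(ν)}. Define ν ∼ ν' for ν, ν' ∈ A_k(s_0) if for every 1 ≤ j ≤ k one has ord_{J_j}(ν) = ord_{J_j}(ν') and {w ∈ J_j : ⟨ν, w⟩ = ord_{J_j}(ν)} = {w ∈ J_j : ⟨ν', w⟩ = ord_{J_j}(ν')}. Then ∼ is an equivalence relation on A_k(s_0) with only finitely many equivalence classes. -/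

import Mathlib

open scoped BigOperators Classical

namespace QO

/-- The standard pairing `⟨ν, m⟩ = ∑ i, ν i * m i` on `ℚ^d`. -/
def pair (d : ℕ) (ν m : Fin d → ℚ) : ℚ := ∑ i, ν i * m i

/-- `E d lam i` is the `i`-th standard basis vector of `ℚ^d` for `1 ≤ i ≤ d`,
and equals the characteristic exponent `λ_{i-d}` for `d + 1 ≤ i` (1-based indexing). -/
def E (d : ℕ) (lam : ℕ → Fin d → ℚ) (i : ℕ) : Fin d → ℚ :=
  if 1 ≤ i ∧ i ≤ d then (fun j => if (j : ℕ) = i - 1 then 1 else 0) else lam (i - d)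

/-- The lattice `M_j = ℤ^d + ℤλ_1 + ⋯ + ℤλ_j`, as an additive subgroup of `ℚ^d`. -/
def Mlat (d : ℕ) (lam : ℕ → Fin d → ℚ) : ℕ → AddSubgroup (Fin d → ℚ)
  | 0 => AddSubgroup.closure (Set.range fun i : Fin d => (fun j => if j = i then (1 : ℚ) else 0))
  | (j + 1) => Mlat d lam j ⊔ AddSubgroup.closure {lam (j + 1)}

/-- The dual lattice `N` of `M = M_g`. -/
def Ndual (d g : ℕ) (lam : ℕ → Fin d → ℚ) : Set (Fin d → ℚ) :=
  { ν | ∀ m ∈ Mlat d lam g, ∃ z : ℤ, pair d ν m = (z : ℚ) }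

/-- Admissible index sets for `J_k`: `k` indices in `{1, …, d+g}`, at most one of which
exceeds `d`, whose associated vectors are linearly independent over `ℚ`. -/
def IdxOk (d g : ℕ) (lam : ℕ → Fin d → ℚ) (k : ℕ) (I : Finset ℕ) : Prop :=
  I.card = k ∧ I ⊆ Finset.Icc 1 (d + g) ∧ (I.filter fun i => d + 1 ≤ i).card ≤ 1 ∧
    LinearIndependent ℚ (fun i : {x // x ∈ I} => E d lam i.1)

/-- The set `J_k` of sums `e_{j_1} + ⋯ + e_{j_k}`. -/
def Jset (d g : ℕ) (lam : ℕ → Fin d → ℚ) (k : ℕ) : Set (Fin d → ℚ) :=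
  { w | ∃ I : Finset ℕ, IdxOk d g lam k I ∧ w = ∑ i ∈ I, E d lam i }

/-- The set `J_k`, as a finite set. -/
noncomputable def Jfin (d g : ℕ) (lam : ℕ → Fin d → ℚ) (k : ℕ) : Finset (Fin d → ℚ) :=
  ((Finset.Icc 1 (d + g)).powerset.filter fun I => IdxOk d g lam k I).image
    fun I => ∑ i ∈ I, E d lam i

/-- The support function `ord_{J_k}(ν) = min_{w ∈ J_k} ⟨ν, w⟩`. -/
noncomputable def ordJ (d g : ℕ) (lam : ℕ → Fin d → ℚ) (k : ℕ) (ν : Fin d → ℚ) : ℚ :=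
  if h : (Jfin d g lam k).Nonempty then ((Jfin d g lam k).image (pair d ν)).min' (h.image _)
  else 0

/-- `φ_k(ν) = ord_{J_k}(ν) - ord_{J_{k-1}}(ν)` (note `ord_{J_0} = 0`, hence also `φ_0 = 0`). -/
noncomputable def phiJ (d g : ℕ) (lam : ℕ → Fin d → ℚ) (k : ℕ) (ν : Fin d → ℚ) : ℚ :=
  ordJ d g lam k ν - ordJ d g lam (k - 1) ν

/-- The sort key of the total order `≤_ν` on the indices `1, …, d+g`: sort by the value
`⟨ν, ·⟩`, breaking ties (in particular ties between an `e_i` with `i ≤ d` and a `λ_j`)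
by the index, so that `e_i` is placed first. -/
noncomputable def keyIdx (d : ℕ) (lam : ℕ → Fin d → ℚ) (ν : Fin d → ℚ) (i : ℕ) : ℚ ×ₗ ℕ :=
  toLex (pair d ν (E d lam i), i)

/-- The `≤_ν`-least element of a finite set of indices. -/
noncomputable def leastIdx (d : ℕ) (lam : ℕ → Fin d → ℚ) (ν : Fin d → ℚ) (S : Finset ℕ) : ℕ :=
  if h : S.Nonempty then (ofLex ((S.image (keyIdx d lam ν)).min' (h.image _))).2 else 0

/-- The `≤_ν`-greatest element of a finite set of indices. -/
noncomputable def greatestIdx (d : ℕ) (lam : ℕ → Fin d → ℚ) (ν : Fin d → ℚ)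
    (S : Finset ℕ) : ℕ :=
  if h : S.Nonempty then (ofLex ((S.image (keyIdx d lam ν)).max' (h.image _))).2 else 0

/-- The `ℚ`-span of the vectors indexed by `I`. -/
def spanOf (d : ℕ) (lam : ℕ → Fin d → ℚ) (I : Finset ℕ) : Submodule ℚ (Fin d → ℚ) :=
  Submodule.span ℚ ((fun i => E d lam i) '' (I : Set ℕ))

/-- `n(k)`: the index `n` such that `λ_n` is a summand of `w_k`, and `0` if there is none. -/
noncomputable def nVal (d : ℕ) (I : Finset ℕ) : ℕ :=
  if h : (I.filter fun i => d + 1 ≤ i).Nonempty then (I.filter fun i => d + 1 ≤ i).min' h - d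
  else 0

/-- `t(k)`: the least `1 ≤ j ≤ g` with `λ_j ∉ ℓ_k(ν)`, and `g + 1` if there is none. -/
noncomputable def tVal (d g : ℕ) (lam : ℕ → Fin d → ℚ) (I : Finset ℕ) : ℕ :=
  if h : ((Finset.Icc 1 g).filter fun j => lam j ∉ spanOf d lam I).Nonempty then
    ((Finset.Icc 1 g).filter fun j => lam j ∉ spanOf d lam I).min' h
  else g + 1

/-- `m(k)`: the index `m` with `({e_1, …, e_d} ∩ ℓ_k(ν)) ∖ {summands of w_k} = {e_m}`,
and `0` if this set is empty. -/
noncomputable def mVal (d : ℕ) (lam : ℕ → Fin d → ℚ) (I : Finset ℕ) : ℕ :=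
  if h : (((Finset.Icc 1 d).filter fun i => E d lam i ∈ spanOf d lam I) \ I).Nonempty then
    (((Finset.Icc 1 d).filter fun i => E d lam i ∈ spanOf d lam I) \ I).min' h
  else 0

/-- `i(k)`: the `≤_ν`-least index `1 ≤ i ≤ d + g` with `w_k + e_i ∈ J_{k+1}`. -/
noncomputable def iVal (d g : ℕ) (lam : ℕ → Fin d → ℚ) (ν : Fin d → ℚ) (k : ℕ)
    (I : Finset ℕ) : ℕ :=
  leastIdx d lam ν ((Finset.Icc 1 (d + g)).filter fun i => IdxOk d g lam (k + 1) (insert i I))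

/-- One step of the algorithm, from the summands of `w_k` to the summands of `w_{k+1}`:
`a_{k+1} = w_k + e_{i(k)}` and `b_{k+1} = w_k - λ_{n(k)} + λ_{t(k)} + e_{m(k)}`; the
candidate `b_{k+1}` is discarded when `m(k) = 0` or `t(k) = g + 1`, and otherwise
`w_{k+1} = a_{k+1}` exactly when `⟨ν, a_{k+1}⟩ ≤ ⟨ν, b_{k+1}⟩`. -/
noncomputable def step (d g : ℕ) (lam : ℕ → Fin d → ℚ) (ν : Fin d → ℚ) (k : ℕ)
    (I : Finset ℕ) : Finset ℕ :=
  let a : Finset ℕ := insert (iVal d g lam ν k I) I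
  let b : Finset ℕ :=
    insert (mVal d lam I) (insert (d + tVal d g lam I)
      (if nVal d I = 0 then I else I.erase (d + nVal d I)))
  if mVal d lam I = 0 ∨ tVal d g lam I = g + 1 then a
  else if pair d ν (∑ i ∈ a, E d lam i) ≤ pair d ν (∑ i ∈ b, E d lam i) then a else b

/-- The index sets `W ν k` of summands of the algorithm's vectors `w_k`; the vector `w_1`
is the `≤_ν`-least element of `{e_1, …, e_d, λ_1}`. -/
noncomputable def W (d g : ℕ) (lam : ℕ → Fin d → ℚ) (ν : Fin d → ℚ) : ℕ → Finset ℕ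
  | 0 => ∅
  | 1 => {leastIdx d lam ν (insert (d + 1) (Finset.Icc 1 d))}
  | (k + 2) => step d g lam ν (k + 1) (W d g lam ν (k + 1))

/-- The algorithm's vector `w_k`. -/
noncomputable def wVec (d g : ℕ) (lam : ℕ → Fin d → ℚ) (ν : Fin d → ℚ) (k : ℕ) :
    Fin d → ℚ :=
  ∑ i ∈ W d g lam ν k, E d lam i

/-- `ℓ_k(ν)`: the `ℚ`-span of the summands of `w_k`. -/
noncomputable def ellK (d g : ℕ) (lam : ℕ → Fin d → ℚ) (ν : Fin d → ℚ) (k : ℕ) :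
    Submodule ℚ (Fin d → ℚ) :=
  spanOf d lam (W d g lam ν k)

/-- `ℓ_ν^s = span_ℚ{e_j : 1 ≤ j < d + t(k), ⟨ν, e_j⟩ ≤ s}`, where `k` is the index with
`φ_k(ν) ≤ s < φ_{k+1}(ν)`. -/
noncomputable def ellS (d g : ℕ) (lam : ℕ → Fin d → ℚ) (ν : Fin d → ℚ) (s : ℚ) (k : ℕ) :
    Submodule ℚ (Fin d → ℚ) :=
  Submodule.span ℚ ((fun i => E d lam i) ''
    { i : ℕ | 1 ≤ i ∧ i < d + tVal d g lam (W d g lam ν k) ∧ pair d ν (E d lam i) ≤ s })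

/-- `p(k)` (with the convention `λ_0 = 0`). -/
noncomputable def pVal (d g : ℕ) (lam : ℕ → Fin d → ℚ) (ν : Fin d → ℚ) (s : ℚ)
    (k : ℕ) : ℕ :=
  if nVal d (W d g lam ν k) = 0 then
    if h : ((Finset.Icc 0 g).filter fun j =>
        pair d ν (if j = 0 then (0 : Fin d → ℚ) else lam j) ≤ s).Nonempty then
      ((Finset.Icc 0 g).filter fun j =>
        pair d ν (if j = 0 then (0 : Fin d → ℚ) else lam j) ≤ s).max' h
    else 0
  else
    (insert (nVal d (W d g lam ν k))
      ((Finset.Ioo (nVal d (W d g lam ν k)) (tVal d g lam (W d g lam ν k))).filter fun j =>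
        mVal d lam (W d g lam ν k) ≠ 0 ∧
          pair d ν (E d lam (mVal d lam (W d g lam ν k)) - lam (nVal d (W d g lam ν k)) + lam j)
            ≤ s)).max' (Finset.insert_nonempty _ _)

/-- `q_η`: the index of the `≤_ν`-greatest element of `{e_1, …, e_d} ∩ ℓ(η)`, where
`ℓ(η) = span_ℚ{e_i : η_i ≠ 0}`. -/
noncomputable def qIdx (d : ℕ) (lam : ℕ → Fin d → ℚ) (ν η : Fin d → ℚ) : ℕ :=
  greatestIdx d lam ν ((Finset.Icc 1 d).filter fun i => pair d η (E d lam i) ≠ 0)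

/-- Membership in the set `A_k(s_0)`: `ν ∈ N`, `⟨ν, e_i⟩ > 0` for all `1 ≤ i ≤ d`, and
`φ_k(ν) ≤ s_0 < φ_{k+1}(ν)` (for `k = d` the upper condition is vacuous). -/
def Acond (d g : ℕ) (lam : ℕ → Fin d → ℚ) (s0 k : ℕ) (ν : Fin d → ℚ) : Prop :=
  ν ∈ Ndual d g lam ∧ (∀ i, 1 ≤ i → i ≤ d → 0 < pair d ν (E d lam i)) ∧
    phiJ d g lam k ν ≤ (s0 : ℚ) ∧ (k < d → (s0 : ℚ) < phiJ d g lam (k + 1) ν)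

/-- The relation `∼`: `ν ∼ ν'` iff for every `1 ≤ j ≤ k`, `ord_{J_j}(ν) = ord_{J_j}(ν')`
and `ν`, `ν'` have the same set of minimizers in `J_j`. -/
def simRel (d g : ℕ) (lam : ℕ → Fin d → ℚ) (k : ℕ) (ν ν' : Fin d → ℚ) : Prop :=
  ∀ j, 1 ≤ j → j ≤ k → ordJ d g lam j ν = ordJ d g lam j ν' ∧
    {w | w ∈ Jset d g lam j ∧ pair d ν w = ordJ d g lam j ν} =
      {w | w ∈ Jset d g lam j ∧ pair d ν' w = ordJ d g lam j ν'}


section Aux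

variable {d g : ℕ} {lam : ℕ → Fin d → ℚ} {ν : Fin d → ℚ}

lemma pair_add (a b : Fin d → ℚ) : pair d ν (a + b) = pair d ν a + pair d ν b := by
  simp [pair, mul_add, Finset.sum_add_distrib]

lemma pair_sum {ι : Type*} (I : Finset ι) (F : ι → Fin d → ℚ) :
    pair d ν (∑ i ∈ I, F i) = ∑ i ∈ I, pair d ν (F i) := by
  simp only [pair, Finset.sum_apply, Finset.mul_sum]
  exact Finset.sum_comm

lemma E_le (i : ℕ) (h1 : 1 ≤ i) (h2 : i ≤ d) :
    E d lam i = (Pi.basisFun ℚ (Fin d)) ⟨i - 1, by omega⟩ := by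
  funext j
  rw [E, if_pos ⟨h1, h2⟩]
  simp only [Pi.basisFun_apply, Pi.single_apply]
  by_cases hj : (j : ℕ) = i - 1
  · rw [if_pos hj, if_pos (Fin.ext hj)]
  · rw [if_neg hj, if_neg (fun h => hj (congrArg Fin.val h))]

lemma E_gt (i : ℕ) (h2 : d < i) : E d lam i = lam (i - d) := by
  rw [E, if_neg (by omega)]

lemma pair_E_coord (j : Fin d) : pair d ν (E d lam ((j : ℕ) + 1)) = ν j := by
  rw [E_le _ (by omega) (by omega : (j : ℕ) + 1 ≤ d)]
  simp only [pair, Pi.basisFun_apply, Pi.single_apply, Nat.add_sub_cancel]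
  rw [Finset.sum_eq_single j]
  · simp
  · intro b _ hb
    rw [if_neg, mul_zero]
    exact fun h => hb (Fin.ext (by simpa using congrArg Fin.val h))
  · exact fun h => absurd (Finset.mem_univ j) h

lemma mem_M0 (i : ℕ) (h1 : 1 ≤ i) (h2 : i ≤ d) : E d lam i ∈ Mlat d lam 0 := by
  rw [E_le i h1 h2]
  refine AddSubgroup.subset_closure ⟨⟨i - 1, by omega⟩, ?_⟩
  funext j; simp [Pi.basisFun_apply, Pi.single_apply, eq_comm]

lemma Mlat_mono {a b : ℕ} (h : a ≤ b) : Mlat d lam a ≤ Mlat d lam b := by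
  induction b with
  | zero => simp [Nat.le_zero.mp h]
  | succ n ih =>
    rcases Nat.lt_or_ge a (n + 1) with h' | h'
    · exact le_trans (ih (by omega)) (le_sup_left : Mlat d lam n ≤ Mlat d lam (n + 1))
    · have : a = n + 1 := by omega
      simp [this]

lemma mem_Mg (i : ℕ) (h1 : 1 ≤ i) (h2 : i ≤ d + g) :
    E d lam i ∈ Mlat d lam g := by
  rcases Nat.lt_or_ge d i with h | h
  swap
  · exact Mlat_mono (Nat.zero_le g) (mem_M0 i h1 h)
  · rw [E_gt i h]
    have h4 : i - d ≤ g := by omega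
    have hm : lam (i - d) ∈ Mlat d lam (i - d) := by
      have hid : i - d = (i - d - 1) + 1 := by omega
      rw [hid]
      refine (le_sup_right : AddSubgroup.closure {lam (i - d - 1 + 1)} ≤ _)
        (AddSubgroup.subset_closure ?_)
      rw [← hid]
      exact rfl
    exact Mlat_mono h4 hm

lemma li_subset {I₂ I : Finset ℕ} (h : I₂ ⊆ I)
    (hIl : LinearIndependent ℚ (fun i : {x // x ∈ I} => E d lam i.1)) :
    LinearIndependent ℚ (fun i : {x // x ∈ I₂} => E d lam i.1) := by
  have := hIl.comp (fun i : {x // x ∈ I₂} => (⟨i.1, h i.2⟩ : {x // x ∈ I}))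
    (fun a b hab => Subtype.ext (Subtype.mk_eq_mk.mp hab))
  exact this

lemma li_of_le (I : Finset ℕ) (hI : ∀ i ∈ I, 1 ≤ i ∧ i ≤ d) :
    LinearIndependent ℚ (fun i : {x // x ∈ I} => E d lam i.1) := by
  let emb : {x // x ∈ I} → Fin d := fun i => ⟨i.1 - 1, by
    have := hI i.1 i.2; omega⟩
  have hinj : Function.Injective emb := by
    intro a b hab
    have ha := hI a.1 a.2; have hb := hI b.1 b.2
    have : a.1 - 1 = b.1 - 1 := congrArg Fin.val hab
    exact Subtype.ext (by omega)
  have he : (fun i : {x // x ∈ I} => E d lam i.1)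
      = fun i => (Pi.basisFun ℚ (Fin d)) (emb i) := by
    funext i
    exact E_le i.1 (hI i.1 i.2).1 (hI i.1 i.2).2
  rw [he]
  exact (Pi.basisFun ℚ (Fin d)).linearIndependent.comp emb hinj

lemma mem_Jfin_of_IdxOk {jj : ℕ} {I : Finset ℕ} (h : IdxOk d g lam jj I) :
    (∑ i ∈ I, E d lam i) ∈ Jfin d g lam jj :=
  Finset.mem_image.mpr ⟨I, Finset.mem_filter.mpr ⟨Finset.mem_powerset.mpr h.2.1, h⟩, rfl⟩

lemma Jfin_nonempty {jj : ℕ} (hj : jj ≤ d) : (Jfin d g lam jj).Nonempty := by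
  refine ⟨∑ i ∈ Finset.Icc 1 jj, E d lam i, mem_Jfin_of_IdxOk ?_⟩
  refine ⟨by simp, ?_, ?_, ?_⟩
  · intro x hx
    simp only [Finset.mem_Icc] at hx ⊢
    omega
  · have he : (Finset.Icc 1 jj |>.filter fun i => d + 1 ≤ i) = ∅ := by
      refine Finset.filter_eq_empty_iff.mpr ?_
      intro x hx
      simp only [Finset.mem_Icc] at hx
      omega
    rw [he]; simp
  · exact li_of_le _ (fun i hi => by simp only [Finset.mem_Icc] at hi; omega)

lemma ordJ_le {jj : ℕ} (hj : jj ≤ d) {w : Fin d → ℚ} (hw : w ∈ Jfin d g lam jj) :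
    ordJ d g lam jj ν ≤ pair d ν w := by
  rw [ordJ, dif_pos (Jfin_nonempty hj)]
  exact Finset.min'_le _ _ (Finset.mem_image_of_mem _ hw)

lemma ordJ_attained {jj : ℕ} (hj : jj ≤ d) :
    ∃ I : Finset ℕ, IdxOk d g lam jj I ∧
      pair d ν (∑ i ∈ I, E d lam i) = ordJ d g lam jj ν := by
  have hne := (Jfin_nonempty (g := g) (lam := lam) hj)
  rw [ordJ, dif_pos hne]
  have hm := Finset.min'_mem ((Jfin d g lam jj).image (pair d ν)) (hne.image _)
  rcases Finset.mem_image.mp hm with ⟨w, hw, hpw⟩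
  rcases Finset.mem_image.mp hw with ⟨I, hI, hwI⟩
  exact ⟨I, (Finset.mem_filter.mp hI).2, by rw [hwI]; exact hpw⟩

lemma ordJ_zero : ordJ d g lam 0 ν = 0 := by
  have h0 : ∀ w ∈ Jfin d g lam 0, w = 0 := by
    intro w hw
    rcases Finset.mem_image.mp hw with ⟨I, hI, hwI⟩
    have he : I = ∅ := Finset.card_eq_zero.mp (Finset.mem_filter.mp hI).2.1
    rw [← hwI, he, Finset.sum_empty]
  rw [ordJ, dif_pos (Jfin_nonempty (Nat.zero_le d))]
  have hm := Finset.min'_mem ((Jfin d g lam 0).image (pair d ν))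
    ((Jfin_nonempty (Nat.zero_le d)).image _)
  rcases Finset.mem_image.mp hm with ⟨w, hw, hpw⟩
  rw [← hpw, h0 w hw]
  simp [pair]

lemma exchange (j : ℕ) (hj : 1 ≤ j)
    {I I' : Finset ℕ} (hI : IdxOk d g lam (j+1) I) (hI' : IdxOk d g lam (j-1) I') :
    ∃ I₁ I₂ : Finset ℕ, IdxOk d g lam j I₁ ∧ IdxOk d g lam j I₂ ∧
      (∑ i ∈ I₁, E d lam i) + (∑ i ∈ I₂, E d lam i)
        = (∑ i ∈ I, E d lam i) + (∑ i ∈ I', E d lam i) := by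
  classical
  obtain ⟨hIc, hIs, hIf, hIl⟩ := hI
  obtain ⟨hI'c, hI's, hI'f, hI'l⟩ := hI'
  set Wsp : Submodule ℚ (Fin d → ℚ) := Submodule.span ℚ (E d lam '' (I' : Set ℕ)) with hWsp
  set S : Finset ℕ := I.filter (fun i => E d lam i ∈ Wsp) with hS
  have hScard : S.card ≤ j - 1 := by
    have hsub : ∀ i : {x // x ∈ S}, E d lam i.1 ∈ Wsp := fun i => (Finset.mem_filter.mp i.2).2
    have hliS : LinearIndependent ℚ (fun i : {x // x ∈ S} => E d lam i.1) :=
      li_subset (Finset.filter_subset _ _) hIl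
    have hliW : LinearIndependent ℚ (fun i : {x // x ∈ S} => (⟨E d lam i.1, hsub i⟩ : Wsp)) :=
      LinearIndependent.of_comp Wsp.subtype (by exact hliS)
    have hcard := hliW.fintype_card_le_finrank
    have hrk : Module.finrank ℚ Wsp ≤ I'.card := by
      have himg : (E d lam '' (I' : Set ℕ)) = ↑(I'.image (E d lam)) := by simp
      rw [hWsp, himg]
      exact le_trans (finrank_span_finset_le_card _) (Finset.card_image_le)
    simp only [Fintype.card_coe] at hcard
    omega
  have hSsub : S ⊆ I := Finset.filter_subset _ _
  have hdiff : 2 ≤ (I \ S).card := by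
    have := Finset.card_sdiff_of_subset hSsub
    omega
  have hx : ∃ x ∈ I \ S, ¬ (d + 1 ≤ x) := by
    by_contra hcon
    push_neg at hcon
    have hss : (I \ S) ⊆ I.filter (fun i => d + 1 ≤ i) := by
      intro x hxm
      exact Finset.mem_filter.mpr ⟨(Finset.mem_sdiff.mp hxm).1, hcon x hxm⟩
    have := Finset.card_le_card hss
    omega
  obtain ⟨x, hxIS, hxd⟩ := hx
  obtain ⟨hxI, hxS⟩ := Finset.mem_sdiff.mp hxIS
  have hxsp : E d lam x ∉ Wsp := fun h => hxS (Finset.mem_filter.mpr ⟨hxI, h⟩)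
  have hx1 : 1 ≤ x := (Finset.mem_Icc.mp (hIs hxI)).1
  have hxnI' : x ∉ I' := fun h =>
    hxsp (Submodule.subset_span (Set.mem_image_of_mem _ (Finset.mem_coe.mpr h)))
  refine ⟨insert x I', I.erase x, ?_, ?_, ?_⟩
  · refine ⟨?_, ?_, ?_, ?_⟩
    · rw [Finset.card_insert_of_notMem hxnI', hI'c]; omega
    · exact Finset.insert_subset (Finset.mem_Icc.mpr ⟨hx1, by omega⟩) hI's
    · rw [Finset.filter_insert, if_neg hxd]; exact hI'f
    · have hinj' : Set.InjOn (E d lam) (I' : Set ℕ) := by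
        intro a ha b hb hab
        have h2 := hI'l.injective (a₁ := ⟨a, Finset.mem_coe.mp ha⟩)
          (a₂ := ⟨b, Finset.mem_coe.mp hb⟩) hab
        exact Subtype.mk_eq_mk.mp h2
      have hset : LinearIndependent ℚ (fun w : (E d lam '' (I' : Set ℕ)) => (w : Fin d → ℚ)) :=
        (linearIndepOn_iff_image hinj').mp hI'l
      have hset2 : LinearIndependent ℚ
          (fun w : (insert (E d lam x) (E d lam '' (I' : Set ℕ)) : Set (Fin d → ℚ)) =>
            (w : Fin d → ℚ)) := LinearIndepOn.id_insert hset hxsp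
      have hinj2 : Set.InjOn (E d lam) ((insert x I' : Finset ℕ) : Set ℕ) := by
        intro a ha b hb hab
        simp only [Finset.coe_insert, Set.mem_insert_iff, Finset.mem_coe] at ha hb
        rcases ha with rfl | ha <;> rcases hb with rfl | hb
        · rfl
        · exact absurd (show E d lam a ∈ Wsp by
            rw [hab]; exact Submodule.subset_span (Set.mem_image_of_mem _ hb)) hxsp
        · exact absurd (show E d lam b ∈ Wsp by
            rw [← hab]; exact Submodule.subset_span (Set.mem_image_of_mem _ ha)) hxsp
        · exact hinj' ha hb hab
      refine (linearIndepOn_iff_image hinj2).mpr ?_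
      have himg : E d lam '' ((insert x I' : Finset ℕ) : Set ℕ)
          = insert (E d lam x) (E d lam '' (I' : Set ℕ)) := by
        rw [Finset.coe_insert, Set.image_insert_eq]
      rw [himg]
      exact hset2
  · refine ⟨?_, (Finset.erase_subset _ _).trans hIs, ?_, li_subset (Finset.erase_subset _ _) hIl⟩
    · rw [Finset.card_erase_of_mem hxI, hIc]; omega
    · exact le_trans (Finset.card_le_card
        (Finset.filter_subset_filter _ (Finset.erase_subset _ _))) hIf
  · rw [Finset.sum_insert hxnI', Finset.sum_erase_eq_sub hxI]
    abel

lemma Jset_coe (jj : ℕ) : Jset d g lam jj = ↑(Jfin d g lam jj) := by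
  ext w
  simp only [Jset, Set.mem_setOf_eq, Finset.mem_coe, Jfin, Finset.mem_image,
    Finset.mem_filter, Finset.mem_powerset]
  constructor
  · rintro ⟨I, hIok, rfl⟩
    exact ⟨I, ⟨hIok.2.1, hIok⟩, rfl⟩
  · rintro ⟨I, ⟨_, hIok⟩, rfl⟩
    exact ⟨I, hIok, rfl⟩

lemma minset_coe (jj : ℕ) (c : ℚ) :
    {w | w ∈ Jset d g lam jj ∧ pair d ν w = c}
      = ↑((Jfin d g lam jj).filter (fun w => pair d ν w = c)) := by
  rw [Jset_coe]
  ext w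
  simp [Finset.mem_filter]

lemma one_le_pair_E (hg : 1 ≤ g) (hN : ν ∈ Ndual d g lam)
    (hpos : ∀ i, 1 ≤ i → i ≤ d → 0 < pair d ν (E d lam i))
    (hnn : ∀ j, 1 ≤ j → j ≤ g → ∀ i, 0 ≤ lam j i)
    (hnotin : ∀ j, 1 ≤ j → j ≤ g → lam j ∉ Mlat d lam (j - 1))
    (i : ℕ) (h1 : 1 ≤ i) (h2 : i ≤ d + g) : (1 : ℚ) ≤ pair d ν (E d lam i) := by
  have hcoord : ∀ j : Fin d, 0 < ν j := by
    intro j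
    have := hpos ((j : ℕ) + 1) (by omega) (by omega)
    rwa [pair_E_coord] at this
  have hEpos : 0 < pair d ν (E d lam i) := by
    rcases Nat.lt_or_ge d i with h | h
    swap
    · exact hpos i h1 h
    · rw [E_gt i h]
      have hn1 : 1 ≤ i - d := by omega
      have hn2 : i - d ≤ g := by omega
      have hne : lam (i - d) ≠ 0 := by
        intro h0
        exact hnotin (i - d) hn1 hn2 (h0 ▸ (Mlat d lam (i - d - 1)).zero_mem)
      obtain ⟨jj, hjj⟩ := Function.ne_iff.mp hne
      refine Finset.sum_pos' (fun x _ => mul_nonneg (hcoord x).le (hnn _ hn1 hn2 x)) ?_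
      refine ⟨jj, Finset.mem_univ _, mul_pos (hcoord jj) ?_⟩
      rcases lt_or_eq_of_le (hnn _ hn1 hn2 jj) with h' | h'
      · exact h'
      · exact absurd h'.symm (by simpa using hjj)
  obtain ⟨z, hz⟩ := hN (E d lam i) (mem_Mg i h1 h2)
  rw [hz] at hEpos ⊢
  exact_mod_cast (by exact_mod_cast hEpos : (0 : ℤ) < z)

lemma pair_Jfin_props (hg : 1 ≤ g) (hN : ν ∈ Ndual d g lam)
    (hpos : ∀ i, 1 ≤ i → i ≤ d → 0 < pair d ν (E d lam i))
    (hnn : ∀ j, 1 ≤ j → j ≤ g → ∀ i, 0 ≤ lam j i)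
    (hnotin : ∀ j, 1 ≤ j → j ≤ g → lam j ∉ Mlat d lam (j - 1))
    {I : Finset ℕ} (hI : I ⊆ Finset.Icc 1 (d + g)) :
    (∃ z : ℤ, pair d ν (∑ i ∈ I, E d lam i) = z) ∧
      0 ≤ pair d ν (∑ i ∈ I, E d lam i) := by
  constructor
  · refine hN _ (AddSubgroup.sum_mem _ (fun i hi => ?_))
    have := Finset.mem_Icc.mp (hI hi)
    exact mem_Mg i this.1 this.2
  · rw [pair_sum]
    refine Finset.sum_nonneg (fun i hi => ?_)
    have hm := Finset.mem_Icc.mp (hI hi)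
    exact le_trans zero_le_one (one_le_pair_E hg hN hpos hnn hnotin i hm.1 hm.2)

end Aux

/-- The relation `∼` is an equivalence relation on `A_k(s_0)` with only finitely many
equivalence classes. -/
theorem statement13 (d g : ℕ) (lam : ℕ → Fin d → ℚ) (hd : 1 ≤ d) (hg : 1 ≤ g)
    (hnn : ∀ j, 1 ≤ j → j ≤ g → ∀ i, 0 ≤ lam j i)
    (hmono : ∀ j, 1 ≤ j → j < g → ∀ i, lam j i ≤ lam (j + 1) i)
    (hnotin : ∀ j, 1 ≤ j → j ≤ g → lam j ∉ Mlat d lam (j - 1))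
    (s0 : ℕ) (hs0 : 1 ≤ s0) (k : ℕ) (hk1 : 1 ≤ k) (hkd : k ≤ d) :
    Equivalence (fun ν ν' : {ν : Fin d → ℚ // Acond d g lam s0 k ν} =>
      simRel d g lam k ν.1 ν'.1) ∧
    Finite (Quot (fun ν ν' : {ν : Fin d → ℚ // Acond d g lam s0 k ν} =>
      simRel d g lam k ν.1 ν'.1)) := by
  classical
  constructor
  · exact ⟨fun ν j _ _ => ⟨rfl, rfl⟩,
      fun h j h1 h2 => ⟨(h j h1 h2).1.symm, (h j h1 h2).2.symm⟩,
      fun hab hbc j h1 h2 => ⟨(hab j h1 h2).1.trans (hbc j h1 h2).1,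
        (hab j h1 h2).2.trans (hbc j h1 h2).2⟩⟩
  -- Finiteness
  have hbd : ∀ ν : Fin d → ℚ, Acond d g lam s0 k ν → ∀ j, 1 ≤ j → j ≤ k →
      ∃ z : ℤ, ordJ d g lam j ν = (z : ℚ) ∧ 0 ≤ z ∧ z ≤ ((d * s0 : ℕ) : ℤ) := by
    intro ν hA
    obtain ⟨hN, hpos, hphik, -⟩ := hA
    have hmono_phi : ∀ j, 1 ≤ j → j + 1 ≤ d →
        phiJ d g lam j ν ≤ phiJ d g lam (j + 1) ν := by
      intro j h1 h2
      obtain ⟨I, hIok, hIe⟩ := ordJ_attained (ν := ν) (jj := j + 1) h2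
      obtain ⟨I', hI'ok, hI'e⟩ := ordJ_attained (ν := ν) (jj := j - 1) (by omega)
      obtain ⟨I₁, I₂, h1ok, h2ok, hsum⟩ := exchange j h1 hIok hI'ok
      have e1 : ordJ d g lam j ν ≤ pair d ν (∑ i ∈ I₁, E d lam i) :=
        ordJ_le (by omega) (mem_Jfin_of_IdxOk h1ok)
      have e2 : ordJ d g lam j ν ≤ pair d ν (∑ i ∈ I₂, E d lam i) :=
        ordJ_le (by omega) (mem_Jfin_of_IdxOk h2ok)
      have heq : pair d ν (∑ i ∈ I₁, E d lam i) + pair d ν (∑ i ∈ I₂, E d lam i)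
          = pair d ν (∑ i ∈ I, E d lam i) + pair d ν (∑ i ∈ I', E d lam i) := by
        rw [← pair_add, ← pair_add, hsum]
      have hphi1 : phiJ d g lam (j + 1) ν = ordJ d g lam (j + 1) ν - ordJ d g lam j ν := by
        simp [phiJ]
      have hphi2 : phiJ d g lam j ν = ordJ d g lam j ν - ordJ d g lam (j - 1) ν := rfl
      rw [hphi1, hphi2]
      linarith [e1, e2, hIe, hI'e, heq]
    have hstep : ∀ b, 1 ≤ b → b < k → phiJ d g lam b ν ≤ phiJ d g lam (b + 1) ν :=
      fun b hb hbk => hmono_phi b hb (by omega)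
    have hchain : ∀ m j, 1 ≤ j → j + m = k → phiJ d g lam j ν ≤ phiJ d g lam k ν := by
      intro m
      induction m with
      | zero => intro j h1 h2; rw [show j = k by omega]
      | succ n ih =>
        intro j h1 h2
        exact le_trans (hstep j h1 (by omega)) (ih (j + 1) (by omega) (by omega))
    have hphile : ∀ j, 1 ≤ j → j ≤ k → phiJ d g lam j ν ≤ (s0 : ℚ) :=
      fun j h1 h2 => le_trans (hchain (k - j) j h1 (by omega)) hphik
    have hordb : ∀ j, j ≤ k → ordJ d g lam j ν ≤ ((j * s0 : ℕ) : ℚ) := by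
      intro j
      induction j with
      | zero => intro _; rw [ordJ_zero]; simp
      | succ n ih =>
        intro h
        have hn := ih (by omega)
        have hp := hphile (n + 1) (by omega) h
        have hdec : ordJ d g lam (n + 1) ν = ordJ d g lam n ν + phiJ d g lam (n + 1) ν := by
          have hx : phiJ d g lam (n + 1) ν = ordJ d g lam (n + 1) ν - ordJ d g lam n ν := by
            simp [phiJ]
          rw [hx]; ring
        rw [hdec]
        push_cast at hn hp ⊢
        nlinarith [hn, hp]
    intro j h1 h2
    obtain ⟨I, hIok, hIe⟩ := ordJ_attained (ν := ν) (jj := j) (le_trans h2 hkd)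
    obtain ⟨⟨z, hz⟩, hnonneg⟩ := pair_Jfin_props hg hN hpos hnn hnotin hIok.2.1
    refine ⟨z, by rw [← hIe, hz], ?_, ?_⟩
    · exact_mod_cast (hz ▸ hnonneg)
    · have hb := hordb j h2
      have hle1 : (z : ℚ) ≤ ((j * s0 : ℕ) : ℚ) := by rw [← hz, hIe]; exact hb
      have hle2 : ((j * s0 : ℕ) : ℚ) ≤ ((d * s0 : ℕ) : ℚ) := by
        exact_mod_cast Nat.mul_le_mul_right s0 (le_trans h2 hkd)
      exact_mod_cast le_trans hle1 hle2
  let Sub := {ν : Fin d → ℚ // Acond d g lam s0 k ν}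
  let F : Sub → (Fin k → ℚ × Finset (Fin d → ℚ)) :=
    fun ν j => (ordJ d g lam ((j : ℕ) + 1) ν.1,
      (Jfin d g lam ((j : ℕ) + 1)).filter
        (fun w => pair d ν.1 w = ordJ d g lam ((j : ℕ) + 1) ν.1))
  have hcompat : ∀ a b : Sub, simRel d g lam k a.1 b.1 → F a = F b := by
    intro a b h
    funext j
    have hj2 : (j : ℕ) + 1 ≤ k := j.isLt
    obtain ⟨ho, hs⟩ := h ((j : ℕ) + 1) (by omega) hj2
    have hs' : (Jfin d g lam ((j : ℕ) + 1)).filter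
          (fun w => pair d a.1 w = ordJ d g lam ((j : ℕ) + 1) a.1)
        = (Jfin d g lam ((j : ℕ) + 1)).filter
          (fun w => pair d b.1 w = ordJ d g lam ((j : ℕ) + 1) b.1) := by
      apply Finset.coe_injective
      rw [← minset_coe, ← minset_coe]
      exact hs
    exact Prod.ext ho hs'
  set T : Set (Fin k → ℚ × Finset (Fin d → ℚ)) := Set.univ.pi
    (fun j : Fin k => ↑(((Finset.Icc (0 : ℤ) ((d * s0 : ℕ) : ℤ)).image
        (fun z : ℤ => (z : ℚ))) ×ˢ (Jfin d g lam ((j : ℕ) + 1)).powerset)) with hT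
  have hTfin : T.Finite := Set.Finite.pi (fun j => Finset.finite_toSet _)
  have hmem : ∀ a : Sub, F a ∈ T := by
    intro a
    rw [hT]
    refine Set.mem_univ_pi.mpr (fun j => ?_)
    rw [Finset.mem_coe, Finset.mem_product]
    constructor
    · obtain ⟨z, hz, hz0, hzb⟩ := hbd a.1 a.2 ((j : ℕ) + 1) (by omega)
        (by have := j.isLt; omega)
      exact Finset.mem_image.mpr ⟨z, Finset.mem_Icc.mpr ⟨hz0, hzb⟩, hz.symm⟩
    · exact Finset.mem_powerset.mpr (Finset.filter_subset _ _)
  have hGinj : ∀ qa qb : Quot (fun ν ν' : Sub => simRel d g lam k ν.1 ν'.1),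
      Quot.lift F hcompat qa = Quot.lift F hcompat qb → qa = qb := by
    intro qa qb
    induction qa using Quot.ind with | _ a => ?_
    induction qb using Quot.ind with | _ b => ?_
    intro h
    apply Quot.sound
    intro j h1 h2
    obtain ⟨j', rfl⟩ : ∃ j', j = j' + 1 := ⟨j - 1, by omega⟩
    have hjf : j' < k := by omega
    have hpair : F a ⟨j', hjf⟩ = F b ⟨j', hjf⟩ := congrFun h ⟨j', hjf⟩
    have ho : ordJ d g lam (j' + 1) a.1 = ordJ d g lam (j' + 1) b.1 :=
      congrArg Prod.fst hpair
    have hs : (Jfin d g lam (j' + 1)).filter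
          (fun w => pair d a.1 w = ordJ d g lam (j' + 1) a.1)
        = (Jfin d g lam (j' + 1)).filter
          (fun w => pair d b.1 w = ordJ d g lam (j' + 1) b.1) :=
      congrArg Prod.snd hpair
    refine ⟨ho, ?_⟩
    rw [minset_coe, minset_coe]
    exact congrArg _ hs
  haveI : Finite ↥T := hTfin.to_subtype
  refine Finite.of_injective
    (fun q : Quot (fun ν ν' : Sub => simRel d g lam k ν.1 ν'.1) =>
      (⟨Quot.lift F hcompat q, ?_⟩ : ↥T))
    (fun qa qb hqq => hGinj qa qb (congrArg Subtype.val hqq))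
  induction q using Quot.ind with | _ a => exact hmem a


end QO
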